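/- Replaceability for the PNS(k) upper bounds: for an arbitrary assignment v : {1,…,k} → {1,…,n} of target outcome values, the probability P(⋂_{j=1}^{k} {Y_j = v(j)}) satisfies: (i) P(⋂_{j=1}^{k} {Y_j = v(j)}) ≤ Σ_{j=1}^{k} P(X = j, Y = v(j)) + Σ_{j=k+1}^{n} P(X = j); (ii) for every j ∈ {1,…,k}, P(⋂_{j=1}^{k} {Y_j = v(j)}) ≤ P(Y_j = v(j)); (iii) for every m ∈ {1,…,k−1} and every choice of pairwise distinct indices t_0, t_1, …, t_m ∈ {1,…,k}, P(⋂_{j=1}^{k} {Y_j = v(j)}) ≤ (1/m) · Σ_{j=0}^{m} [ P(Y_{t_j} = v(t_j)) − P(X = t_j, Y = v(t_j)) ]. -/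

import Mathlib

open MeasureTheory

theorem pns_k_upper_bounds_replaceability
    {Ω : Type*} [MeasurableSpace Ω] (P : Measure Ω) [IsProbabilityMeasure P]
    (n k : ℕ) (hk1 : 1 ≤ k) (hkn : k ≤ n)
    (X : Ω → ℕ) (Y : ℕ → Ω → ℕ) (Yobs : Ω → ℕ)
    (hX : Measurable X) (hY : ∀ j, Measurable (Y j))
    (hXr : ∀ ω, X ω ∈ Finset.Icc 1 n)
    (hYr : ∀ j ω, Y j ω ∈ Finset.Icc 1 n)
    (hcons : ∀ ω, Yobs ω = Y (X ω) ω)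
    (v : ℕ → ℕ) (hv : ∀ j ∈ Finset.Icc 1 k, v j ∈ Finset.Icc 1 n) :
    (P (⋂ j ∈ Finset.Icc 1 k, {ω | Y j ω = v j})).toReal ≤
      (∑ j ∈ Finset.Icc 1 k, (P {ω | X ω = j ∧ Yobs ω = v j}).toReal)
        + ∑ j ∈ Finset.Icc (k+1) n, (P {ω | X ω = j}).toReal ∧
    (∀ j ∈ Finset.Icc 1 k, (P (⋂ j ∈ Finset.Icc 1 k, {ω | Y j ω = v j})).toReal ≤ (P {ω | Y j ω = v j}).toReal) ∧
    ∀ m : ℕ, 1 ≤ m → m < k → ∀ t : ℕ → ℕ,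
      (∀ j ∈ Finset.range (m+1), t j ∈ Finset.Icc 1 k) →
      Set.InjOn t ↑(Finset.range (m+1)) →
      (P (⋂ j ∈ Finset.Icc 1 k, {ω | Y j ω = v j})).toReal ≤
        (1 / (m : ℝ)) * ∑ j ∈ Finset.range (m+1),
          ((P {ω | Y (t j) ω = v (t j)}).toReal - (P {ω | X ω = t j ∧ Yobs ω = v (t j)}).toReal) := by
  classical
  set E : Set Ω := ⋂ j ∈ Finset.Icc 1 k, {ω | Y j ω = v j} with hEdef
  have hmY : ∀ j c, MeasurableSet {ω | Y j ω = c} :=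
    fun j c => (hY j) (measurableSet_singleton c)
  have hmX : ∀ c, MeasurableSet {ω | X ω = c} :=
    fun c => hX (measurableSet_singleton c)
  have hmE : MeasurableSet E :=
    Finset.measurableSet_biInter _ (fun j _ => hmY j (v j))
  have hne : ∀ s : Set Ω, P s ≠ ⊤ := fun s => measure_ne_top P s
  have hEsub : ∀ j ∈ Finset.Icc 1 k, E ⊆ {ω | Y j ω = v j} := by
    intro j hj ω hω
    exact Set.mem_iInter₂.mp hω j hj
  have hEX : ∀ j ∈ Finset.Icc 1 k,
      E ∩ {ω | X ω = j} ⊆ {ω | X ω = j ∧ Yobs ω = v j} := by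
    intro j hj ω hω
    have h1 : Y j ω = v j := hEsub j hj hω.1
    have h2 : X ω = j := hω.2
    refine ⟨h2, ?_⟩
    rw [hcons ω, h2, h1]
  refine ⟨?_, ?_, ?_⟩
  · -- part (i)
    have hcover : E ⊆ ⋃ j ∈ Finset.Icc 1 n, E ∩ {ω | X ω = j} := fun ω hω =>
      Set.mem_biUnion (hXr ω) ⟨hω, rfl⟩
    have h1 : P E ≤ ∑ j ∈ Finset.Icc 1 n, P (E ∩ {ω | X ω = j}) :=
      (measure_mono hcover).trans (measure_biUnion_finset_le _ _)
    have e1 : Finset.Icc 1 k = Finset.Ioc 0 k := by ext x; simp; omega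
    have e2 : Finset.Icc (k+1) n = Finset.Ioc k n := by ext x; simp
    have e3 : Finset.Icc 1 n = Finset.Ioc 0 n := by ext x; simp; omega
    have hsplit : ∑ j ∈ Finset.Icc 1 n, P (E ∩ {ω | X ω = j})
        = ∑ j ∈ Finset.Icc 1 k, P (E ∩ {ω | X ω = j})
          + ∑ j ∈ Finset.Icc (k+1) n, P (E ∩ {ω | X ω = j}) := by
      rw [e1, e2, e3, Finset.sum_Ioc_consecutive _ (Nat.zero_le k) hkn]
    have h2 : P E ≤ (∑ j ∈ Finset.Icc 1 k, P {ω | X ω = j ∧ Yobs ω = v j})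
        + ∑ j ∈ Finset.Icc (k+1) n, P {ω | X ω = j} := by
      refine h1.trans ?_
      rw [hsplit]
      exact add_le_add
        (Finset.sum_le_sum fun j hj => measure_mono (hEX j hj))
        (Finset.sum_le_sum fun j hj => measure_mono Set.inter_subset_right)
    have h3 := ENNReal.toReal_mono (by
      exact ENNReal.add_ne_top.2 ⟨ENNReal.sum_ne_top.2 fun j _ => hne _,
        ENNReal.sum_ne_top.2 fun j _ => hne _⟩) h2
    rwa [ENNReal.toReal_add (ENNReal.sum_ne_top.2 fun j _ => hne _)
        (ENNReal.sum_ne_top.2 fun j _ => hne _),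
      ENNReal.toReal_sum (fun j _ => hne _),
      ENNReal.toReal_sum (fun j _ => hne _)] at h3
  · -- part (ii)
    intro j hj
    exact ENNReal.toReal_mono (hne _) (measure_mono (hEsub j hj))
  · -- part (iii)
    intro m hm1 hmk t ht htinj
    have hAeq : ∀ j, {ω | X ω = t j ∧ Yobs ω = v (t j)}
        = {ω | X ω = t j} ∩ {ω | Y (t j) ω = v (t j)} := by
      intro j
      ext ω
      simp only [Set.mem_setOf_eq, Set.mem_inter_iff]
      constructor
      · rintro ⟨h1, h2⟩
        exact ⟨h1, by rw [← h2, hcons ω, h1]⟩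
      · rintro ⟨h1, h2⟩
        exact ⟨h1, by rw [hcons ω, h1, h2]⟩
    have hmA : ∀ j, MeasurableSet {ω | X ω = t j ∧ Yobs ω = v (t j)} := by
      intro j
      rw [hAeq j]
      exact (hmX (t j)).inter (hmY (t j) (v (t j)))
    have key : ∀ j ∈ Finset.range (m+1),
        P E + P {ω | X ω = t j ∧ Yobs ω = v (t j)}
          ≤ P (E ∩ {ω | X ω = t j}) + P {ω | Y (t j) ω = v (t j)} := by
      intro j hj
      have htj : t j ∈ Finset.Icc 1 k := ht j hj
      set A : Set Ω := {ω | X ω = t j ∧ Yobs ω = v (t j)} with hAdef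
      set B : Set Ω := {ω | Y (t j) ω = v (t j)} with hBdef
      have hAB : A ⊆ B := by
        rw [hAdef, hAeq j]
        exact Set.inter_subset_right
      have hEA : E ∩ A = E ∩ {ω | X ω = t j} := by
        apply Set.Subset.antisymm
        · exact Set.inter_subset_inter_right _ (fun ω hω => hω.1)
        · intro ω hω
          exact ⟨hω.1, hEX (t j) htj hω⟩
      have h1 : P (E ∩ A) + P (E \ A) = P E := measure_inter_add_diff E (hmA j)
      have h2 : P (B ∩ A) + P (B \ A) = P B := measure_inter_add_diff B (hmA j)
      have h3 : B ∩ A = A := Set.inter_eq_self_of_subset_right hAB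
      have h4 : P (E \ A) ≤ P (B \ A) :=
        measure_mono (Set.diff_subset_diff_left (hEsub (t j) htj))
      calc P E + P A = P (E ∩ A) + P (E \ A) + P A := by rw [h1]
        _ ≤ P (E ∩ A) + P (B \ A) + P A := by gcongr
        _ = P (E ∩ {ω | X ω = t j}) + (P (B ∩ A) + P (B \ A)) := by
            rw [hEA, h3]; ring
        _ = P (E ∩ {ω | X ω = t j}) + P B := by rw [h2]
    have hsum : ∑ j ∈ Finset.range (m+1),
          (P E + P {ω | X ω = t j ∧ Yobs ω = v (t j)})
        ≤ ∑ j ∈ Finset.range (m+1),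
          (P (E ∩ {ω | X ω = t j}) + P {ω | Y (t j) ω = v (t j)}) :=
      Finset.sum_le_sum key
    have hdisj : Set.PairwiseDisjoint (↑(Finset.range (m+1)) : Set ℕ)
        (fun j => E ∩ {ω | X ω = t j}) := by
      intro i hi j hj hij
      refine Set.disjoint_left.mpr ?_
      rintro ω ⟨-, hωi⟩ ⟨-, hωj⟩
      exact hij (htinj hi hj (by
        simp only [Set.mem_setOf_eq] at hωi hωj
        rw [← hωi, ← hωj]))
    have hcsum : ∑ j ∈ Finset.range (m+1), P (E ∩ {ω | X ω = t j}) ≤ P E := by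
      rw [← measure_biUnion_finset hdisj (fun j _ => hmE.inter (hmX (t j)))]
      exact measure_mono (Set.iUnion₂_subset fun j _ => Set.inter_subset_left)
    have h5 : ∑ j ∈ Finset.range (m+1),
          (P E + P {ω | X ω = t j ∧ Yobs ω = v (t j)})
        = P E + ((m : ENNReal) * P E
            + ∑ j ∈ Finset.range (m+1), P {ω | X ω = t j ∧ Yobs ω = v (t j)}) := by
      rw [Finset.sum_add_distrib, Finset.sum_const, Finset.card_range, nsmul_eq_mul]
      push_cast
      ring
    have hmain : (m : ENNReal) * P E
          + ∑ j ∈ Finset.range (m+1), P {ω | X ω = t j ∧ Yobs ω = v (t j)}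
        ≤ ∑ j ∈ Finset.range (m+1), P {ω | Y (t j) ω = v (t j)} := by
      rw [← ENNReal.add_le_add_iff_left (hne E)]
      calc P E + ((m : ENNReal) * P E
            + ∑ j ∈ Finset.range (m+1), P {ω | X ω = t j ∧ Yobs ω = v (t j)})
          = ∑ j ∈ Finset.range (m+1),
              (P E + P {ω | X ω = t j ∧ Yobs ω = v (t j)}) := h5.symm
        _ ≤ ∑ j ∈ Finset.range (m+1),
              (P (E ∩ {ω | X ω = t j}) + P {ω | Y (t j) ω = v (t j)}) := hsum
        _ = (∑ j ∈ Finset.range (m+1), P (E ∩ {ω | X ω = t j}))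
            + ∑ j ∈ Finset.range (m+1), P {ω | Y (t j) ω = v (t j)} :=
              Finset.sum_add_distrib
        _ ≤ P E + ∑ j ∈ Finset.range (m+1), P {ω | Y (t j) ω = v (t j)} := by
              gcongr
    have hreal : (m : ℝ) * (P E).toReal
          + ∑ j ∈ Finset.range (m+1),
              (P {ω | X ω = t j ∧ Yobs ω = v (t j)}).toReal
        ≤ ∑ j ∈ Finset.range (m+1), (P {ω | Y (t j) ω = v (t j)}).toReal := by
      have h6 := ENNReal.toReal_mono (ENNReal.sum_ne_top.2 fun j _ => hne _) hmain
      rwa [ENNReal.toReal_add (by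
            exact ENNReal.mul_ne_top (by simp) (hne E))
          (ENNReal.sum_ne_top.2 fun j _ => hne _),
        ENNReal.toReal_mul, ENNReal.toReal_natCast,
        ENNReal.toReal_sum (fun j _ => hne _),
        ENNReal.toReal_sum (fun j _ => hne _)] at h6
    have hmpos : (0 : ℝ) < m := by exact_mod_cast hm1
    rw [Finset.sum_sub_distrib, one_div, inv_mul_eq_div, le_div_iff₀ hmpos]
    linarith
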